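/- Let t₀ > 0 and let f : [−t₀, t₀] → ℝ be a C², even, positive function with f'(t₀) = 0. Define K(t) = −f''(t)/f(t), and assume K is monotone nonincreasing on [0, t₀], K(0) > 0 and K(t₀) < 0. Then f'(t) < 0 for every t ∈ (0, t₀); in particular f is strictly decreasing on (0, t₀) and the geodesic curvature h(t) = f'(t)/f(t) is strictly negative on (0, t₀). -/

import Mathlib

/-- For a rotationally symmetric torus profile `f` (even, positive, `f'(t₀) = 0`)
with Gauss curvature `K = −f''/f` nonincreasing on `[0, t₀]`, `K(0) > 0` and
`K(t₀) < 0`, the profile satisfies `f' < 0` on `(0, t₀)`: `f` is strictly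
decreasing there and the geodesic curvature `h = f'/f` is strictly negative. -/
theorem stmt_5 (t₀ : ℝ) (ht₀ : 0 < t₀) (f : ℝ → ℝ) (hf : ContDiff ℝ 2 f)
    (hfpos : ∀ t ∈ Set.Icc (-t₀) t₀, 0 < f t)
    (heven : ∀ t, f (-t) = f t) (hft₀ : deriv f t₀ = 0)
    (hK : AntitoneOn (fun t => -(deriv (deriv f) t) / f t) (Set.Icc 0 t₀))
    (hK0 : 0 < -(deriv (deriv f) 0) / f 0)
    (hKt₀ : -(deriv (deriv f) t₀) / f t₀ < 0) :
    (∀ t ∈ Set.Ioo 0 t₀, deriv f t < 0) ∧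
    StrictAntiOn f (Set.Ioo 0 t₀) ∧
    (∀ t ∈ Set.Ioo 0 t₀, deriv f t / f t < 0) := by
  set K : ℝ → ℝ := fun t => -(deriv (deriv f) t) / f t with hKdef
  -- regularity
  have hdf : Differentiable ℝ f := hf.differentiable (by norm_num)
  have hf1 : ContDiff ℝ 1 (deriv f) := by
    have h2 : ContDiff ℝ ((1 : WithTop ℕ∞) + 1) f := by
      have : ((1 : WithTop ℕ∞) + 1) = 2 := by norm_num
      rw [this]; exact hf
    exact (contDiff_succ_iff_deriv.mp h2).2.2
  have hdf' : Differentiable ℝ (deriv f) := hf1.differentiable one_ne_zero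
  have hd2cont : Continuous (deriv (deriv f)) := by
    have h1 : ContDiff ℝ ((0 : WithTop ℕ∞) + 1) (deriv f) := by
      have : ((0 : WithTop ℕ∞) + 1) = 1 := by norm_num
      rw [this]; exact hf1
    exact ((contDiff_succ_iff_deriv.mp h1).2.2).continuous
  -- deriv f 0 = 0 from evenness
  have hderiv0 : deriv f 0 = 0 := by
    have h1 : deriv (fun t => f (-t)) 0 = -deriv f (-0) := deriv_comp_neg f 0
    have h2 : (fun t => f (-t)) = f := funext heven
    rw [h2, neg_zero] at h1
    linarith
  have hsub : Set.Icc (0:ℝ) t₀ ⊆ Set.Icc (-t₀) t₀ :=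
    Set.Icc_subset_Icc (by linarith) le_rfl
  have hfpos' : ∀ t ∈ Set.Icc (0:ℝ) t₀, 0 < f t := fun t ht => hfpos t (hsub ht)
  -- continuity of K on [0, t₀]
  have hKc : ContinuousOn K (Set.Icc 0 t₀) := by
    apply ContinuousOn.div (hd2cont.neg.continuousOn) (hdf.continuous.continuousOn)
    intro t ht; exact (hfpos' t ht).ne'
  -- sign of second derivative from sign of K
  have hd2neg : ∀ x ∈ Set.Icc (0:ℝ) t₀, 0 < K x → deriv (deriv f) x < 0 := by
    intro x hx hKx
    have hfx := hfpos' x hx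
    rcases div_pos_iff.mp hKx with ⟨h, _⟩ | ⟨_, h⟩
    · linarith
    · linarith
  have hd2nonpos : ∀ x ∈ Set.Icc (0:ℝ) t₀, 0 ≤ K x → deriv (deriv f) x ≤ 0 := by
    intro x hx hKx
    have hfx := hfpos' x hx
    by_contra h
    push_neg at h
    have : K x < 0 := div_neg_of_neg_of_pos (by linarith) hfx
    linarith
  have hd2pos : ∀ x ∈ Set.Icc (0:ℝ) t₀, K x < 0 → 0 < deriv (deriv f) x := by
    intro x hx hKx
    have hfx := hfpos' x hx
    rcases div_neg_iff.mp hKx with ⟨_, h⟩ | ⟨h, _⟩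
    · linarith
    · linarith
  -- the set where K is nonnegative
  set S : Set ℝ := Set.Icc 0 t₀ ∩ K ⁻¹' Set.Ici 0 with hSdef
  have hSclosed : IsClosed S :=
    hKc.preimage_isClosed_of_isClosed isClosed_Icc isClosed_Ici
  have hSne : S.Nonempty := ⟨0, ⟨le_rfl, ht₀.le⟩, hK0.le⟩
  have hSbdd : BddAbove S := ⟨t₀, fun x hx => hx.1.2⟩
  set a : ℝ := sSup S with hadef
  have haS : a ∈ S := hSclosed.csSup_mem hSne hSbdd
  have haIcc : a ∈ Set.Icc (0:ℝ) t₀ := haS.1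
  have hKa : 0 ≤ K a := haS.2
  have halt : a < t₀ := by
    rcases lt_or_eq_of_le haIcc.2 with h | h
    · exact h
    · rw [h] at hKa; linarith
  -- K ≥ 0 strictly below a
  have hKnn : ∀ x ∈ Set.Icc (0:ℝ) t₀, x < a → 0 ≤ K x := by
    intro x hx hxa
    obtain ⟨s, hsS, hxs⟩ := exists_lt_of_lt_csSup hSne hxa
    exact le_trans hsS.2 (hK hx hsS.1 hxs.le)
  -- K < 0 strictly above a
  have hKneg : ∀ x ∈ Set.Icc (0:ℝ) t₀, a < x → K x < 0 := by
    intro x hx hax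
    by_contra h
    push_neg at h
    have : x ∈ S := ⟨hx, h⟩
    exact absurd (le_csSup hSbdd this) (not_le.mpr hax)
  -- K > 0 on a right neighborhood of 0
  have hcw : ContinuousWithinAt K (Set.Icc 0 t₀) 0 :=
    hKc 0 ⟨le_rfl, ht₀.le⟩
  have hmem : K ⁻¹' Set.Ioi 0 ∈ nhdsWithin 0 (Set.Icc 0 t₀) :=
    hcw (Ioi_mem_nhds hK0)
  rw [nhdsWithin_Icc_eq_nhdsGE ht₀] at hmem
  obtain ⟨u, hu, husub⟩ := mem_nhdsGE_iff_exists_Ico_subset.mp hmem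
  have hu0 : (0:ℝ) < u := hu
  -- main claim
  have hmain : ∀ t ∈ Set.Ioo 0 t₀, deriv f t < 0 := by
    intro t ht
    obtain ⟨ht0, htt₀⟩ := ht
    rcases le_or_gt t a with hta | hta
    · -- case 0 < t ≤ a
      set s : ℝ := min t (u / 2) with hsdef
      have hs0 : 0 < s := lt_min ht0 (by linarith)
      have hst : s ≤ t := min_le_left _ _
      have hsu : s < u := lt_of_le_of_lt (min_le_right _ _) (by linarith)
      have hsIcc : ∀ x ∈ Set.Icc (0:ℝ) s, x ∈ Set.Icc (0:ℝ) t₀ := by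
        intro x hx; exact ⟨hx.1, by linarith [hx.2]⟩
      -- deriv f strictly decreasing on [0, s]
      have hanti : StrictAntiOn (deriv f) (Set.Icc 0 s) := by
        apply strictAntiOn_of_deriv_neg (convex_Icc 0 s) (hdf'.continuous.continuousOn)
        intro x hx
        rw [interior_Icc] at hx
        have hxIcc : x ∈ Set.Icc (0:ℝ) t₀ := hsIcc x ⟨hx.1.le, hx.2.le⟩
        have hKx : 0 < K x := husub ⟨hx.1.le, by linarith [hx.2]⟩
        exact hd2neg x hxIcc hKx
      have h1 : deriv f s < 0 := by
        have := hanti ⟨le_rfl, hs0.le⟩ ⟨hs0.le, le_rfl⟩ hs0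
        rwa [hderiv0] at this
      -- deriv f nonincreasing on [s, t]
      have hanti2 : AntitoneOn (deriv f) (Set.Icc s t) := by
        apply antitoneOn_of_deriv_nonpos (convex_Icc s t) (hdf'.continuous.continuousOn)
          (hdf'.differentiableOn)
        intro x hx
        rw [interior_Icc] at hx
        have hxIcc : x ∈ Set.Icc (0:ℝ) t₀ := ⟨by linarith [hx.1], by linarith [hx.2]⟩
        rcases lt_or_eq_of_le (le_trans hx.2.le hta) with h | h
        · exact hd2nonpos x hxIcc (hKnn x hxIcc h)
        · exact hd2nonpos x hxIcc (h ▸ hKa)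
      have h2 : deriv f t ≤ deriv f s := hanti2 ⟨le_rfl, hst⟩ ⟨hst, le_rfl⟩ hst
      linarith
    · -- case a < t < t₀
      have hmono : StrictMonoOn (deriv f) (Set.Icc t t₀) := by
        apply strictMonoOn_of_deriv_pos (convex_Icc t t₀) (hdf'.continuous.continuousOn)
        intro x hx
        rw [interior_Icc] at hx
        have hxIcc : x ∈ Set.Icc (0:ℝ) t₀ := ⟨by linarith [hx.1], hx.2.le⟩
        exact hd2pos x hxIcc (hKneg x hxIcc (by linarith [hx.1]))
      have := hmono ⟨le_rfl, htt₀.le⟩ ⟨htt₀.le, le_rfl⟩ htt₀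
      rwa [hft₀] at this
  refine ⟨hmain, ?_, ?_⟩
  · apply strictAntiOn_of_deriv_neg (convex_Ioo 0 t₀) (hdf.continuous.continuousOn)
    intro x hx
    rw [interior_Ioo] at hx
    exact hmain x hx
  · intro t ht
    exact div_neg_of_neg_of_pos (hmain t ht)
      (hfpos t ⟨by linarith [ht.1], ht.2.le⟩)
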